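/- For every bounded set F ⊆ ℝ^d, the generalized upper box dimension of F equals the upper box dimension of F; that is, limsup_{θ→0⁺} dim_A^θ F = \overline{dim}_B F. -/

import Mathlib

open Filter Metric Set Topology Bornology ENNReal

noncomputable section

variable {X : Type*} [PseudoMetricSpace X]

/-- `coveringNumber r E` is the smallest number of closed balls of radius `r`
needed to cover `E` (with value `⊤` if no finite cover exists). -/
def coveringNumber (r : ℝ) (E : Set X) : ℕ∞ :=
  sInf {n : ℕ∞ | ∃ t : Finset X, (E ⊆ ⋃ x ∈ t, closedBall x r) ∧ (t.card : ℕ∞) = n}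

/-- The Assouad spectrum `dim_A^θ F`. -/
def assouadSpectrum (θ : ℝ) (F : Set X) : ℝ :=
  sInf {s : ℝ | 0 ≤ s ∧ ∃ C > (0 : ℝ), ∀ R : ℝ, 0 < R → R < 1 → ∀ x ∈ F,
    (coveringNumber (R ^ (1 / θ)) (closedBall x R ∩ F) : ℝ≥0∞)
      ≤ ENNReal.ofReal (C * (R / R ^ (1 / θ)) ^ s)}

/-- The upper spectrum `\overline{dim}_A^θ F`. -/
def upperSpectrum (θ : ℝ) (F : Set X) : ℝ :=
  sInf {s : ℝ | 0 ≤ s ∧ ∃ C > (0 : ℝ), ∀ r R : ℝ, 0 < r → r ≤ R ^ (1 / θ) →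
    R ^ (1 / θ) < R → R < 1 → 0 < R → ∀ x ∈ F,
    (coveringNumber r (closedBall x R ∩ F) : ℝ≥0∞) ≤ ENNReal.ofReal (C * (R / r) ^ s)}

/-- The generalized upper box dimension `\overline{dim}_{GB} F := limsup_{θ → 0⁺} dim_A^θ F`. -/
def genUpperBoxDim (F : Set X) : ℝ :=
  limsup (fun θ : ℝ => assouadSpectrum θ F) (𝓝[>] (0 : ℝ))

/-- The quasi-Assouad dimension `dim_{qA} F := lim_{θ → 1⁻} \overline{dim}_A^θ F`
(the limit exists by monotonicity, hence equals the limsup). -/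
def quasiAssouadDim (F : Set X) : ℝ :=
  limsup (fun θ : ℝ => upperSpectrum θ F) (𝓝[<] (1 : ℝ))

/-- The upper box dimension `\overline{dim}_B F := limsup_{δ → 0⁺} log N_δ(F) / (- log δ)`. -/
def upperBoxDim (F : Set X) : ℝ :=
  limsup (fun δ : ℝ => Real.log ((coveringNumber δ F).toNat : ℝ) / (- Real.log δ))
    (𝓝[>] (0 : ℝ))

/-- The Assouad dimension `dim_A F`. -/
def assouadDim (F : Set X) : ℝ :=
  sInf {s : ℝ | 0 ≤ s ∧ ∃ C > (0 : ℝ), ∃ ρ > (0 : ℝ), ∀ r R : ℝ, 0 < r → r < R → R < ρ →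
    ∀ x ∈ F, (coveringNumber r (closedBall x R ∩ F) : ℝ≥0∞) ≤ ENNReal.ofReal (C * (R / r) ^ s)}

/-- The packing pre-measure at scale `δ`: the supremum of `∑ |B_i|^s` over at most countable
collections of disjoint closed balls of radii at most `δ` (and positive) with centres in `F`,
where `|B_i| = 2 r_i` is the diameter. -/
def packingPre (s δ : ℝ) (F : Set X) : ℝ≥0∞ :=
  ⨆ (D : Set (X × ℝ)) (_ : D.Countable)
    (_ : ∀ p ∈ D, p.1 ∈ F ∧ 0 < p.2 ∧ p.2 ≤ δ)
    (_ : D.Pairwise fun p q => Disjoint (closedBall p.1 p.2) (closedBall q.1 q.2)),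
    ∑' p : D, ENNReal.ofReal ((2 * (p : X × ℝ).2) ^ s)

/-- `𝒫₀^s(F) := lim_{δ → 0} 𝒫_δ^s(F)`; the limit exists by monotonicity and equals the inf. -/
def packingPre₀ (s : ℝ) (F : Set X) : ℝ≥0∞ :=
  ⨅ (δ : ℝ) (_ : 0 < δ), packingPre s δ F

/-- The packing (outer) measure `𝒫^s(F)`. -/
def packingMeasure (s : ℝ) (F : Set X) : ℝ≥0∞ :=
  ⨅ (G : ℕ → Set X) (_ : F ⊆ ⋃ i, G i), ∑' i, packingPre₀ s (G i)

/-- The packing dimension `dim_P F = inf {s ≥ 0 : 𝒫^s(F) = 0}`. -/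
def packingDim (F : Set X) : ℝ :=
  sInf {s : ℝ | 0 ≤ s ∧ packingMeasure s F = 0}



section AuxCovering

lemma covN_le {r : ℝ} {E : Set X} (t : Finset X) (h : E ⊆ ⋃ x ∈ t, closedBall x r) :
    coveringNumber r E ≤ (t.card : ℕ∞) := sInf_le ⟨t, h, rfl⟩

lemma exists_cover {r : ℝ} {E : Set X} {n : ℕ} (h : coveringNumber r E ≤ (n : ℕ∞)) :
    ∃ t : Finset X, (E ⊆ ⋃ x ∈ t, closedBall x r) ∧ t.card ≤ n := by
  have h2 : coveringNumber r E < ((n+1 : ℕ) : ℕ∞) := by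
    refine lt_of_le_of_lt h ?_
    exact_mod_cast Nat.lt_succ_self n
  obtain ⟨a, ⟨t, ht, rfl⟩, hlt⟩ := sInf_lt_iff.1 h2
  exact ⟨t, ht, by exact_mod_cast Nat.lt_succ_iff.1 (by exact_mod_cast hlt)⟩

lemma covN_mono {r : ℝ} {E E' : Set X} (h : E ⊆ E') :
    coveringNumber r E ≤ coveringNumber r E' := by
  refine le_sInf fun n ⟨t, ht, hc⟩ => hc ▸ covN_le t (h.trans ht)

lemma covN_anti {r r' : ℝ} (E : Set X) (h : r ≤ r') :
    coveringNumber r' E ≤ coveringNumber r E := by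
  refine le_sInf fun n ⟨t, ht, hc⟩ => hc ▸ covN_le t (ht.trans ?_)
  exact iUnion₂_mono fun x _ => closedBall_subset_closedBall h

lemma covN_empty (r : ℝ) : coveringNumber r (∅ : Set X) = 0 := by
  refine le_antisymm ?_ zero_le
  simpa using covN_le (r := r) (E := (∅ : Set X)) ∅ (by simp)

lemma one_le_covN {r : ℝ} {E : Set X} (hE : E.Nonempty) : 1 ≤ coveringNumber r E := by
  refine le_sInf fun n ⟨t, ht, hc⟩ => ?_
  subst hc
  obtain ⟨x, hx⟩ := hE
  have := ht hx
  simp only [mem_iUnion] at this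
  obtain ⟨y, hy, -⟩ := this
  have : 0 < t.card := Finset.card_pos.2 ⟨y, hy⟩
  exact_mod_cast this

lemma covN_biUnion_le {r : ℝ} {F : Set X} {G : X → Set X} {n : ℕ} (t : Finset X)
    (hcov : F ⊆ ⋃ y ∈ t, G y) (hn : ∀ y ∈ t, coveringNumber r (G y) ≤ (n : ℕ∞)) :
    coveringNumber r F ≤ ((t.card * n : ℕ) : ℕ∞) := by
  classical
  choose u hu hcard using fun y (hy : y ∈ t) => exists_cover (hn y hy)
  set U : Finset X := t.attach.biUnion (fun y => u y.1 y.2) with hU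
  have hcovU : F ⊆ ⋃ x ∈ U, closedBall x r := by
    intro z hz
    obtain ⟨y, hy, hzy⟩ := by simpa only [mem_iUnion] using hcov hz
    have := hu y hy hzy
    simp only [mem_iUnion] at this ⊢
    obtain ⟨x, hx, hzx⟩ := this
    exact ⟨x, Finset.mem_biUnion.2 ⟨⟨y, hy⟩, Finset.mem_attach _ _, hx⟩, hzx⟩
  refine le_trans (covN_le U hcovU) ?_
  have : U.card ≤ t.card * n := by
    refine le_trans (Finset.card_biUnion_le) ?_
    calc ∑ y ∈ t.attach, (u y.1 y.2).card ≤ ∑ _y ∈ t.attach, n :=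
          Finset.sum_le_sum fun y _ => hcard y.1 y.2
      _ = t.card * n := by simp [Finset.card_attach, Finset.sum_const, Nat.smul_one_eq_cast]
  exact_mod_cast this

lemma covN_ne_top {r : ℝ} {E : Set X} (hr : 0 < r) (hE : TotallyBounded E) :
    coveringNumber r E ≠ ⊤ := by
  classical
  obtain ⟨t, htf, ht⟩ := totallyBounded_iff.1 hE r hr
  have : E ⊆ ⋃ x ∈ htf.toFinset, closedBall x r := by
    refine ht.trans (iUnion₂_subset fun y hy => ?_)
    refine subset_trans ball_subset_closedBall (subset_iUnion₂_of_subset y ?_ subset_rfl)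
    simpa using hy
  exact ne_top_of_le_ne_top (by simp) (covN_le _ this)

lemma covN_toNat_le {r : ℝ} {E : Set X} {n : ℕ} (h : coveringNumber r E ≤ (n : ℕ∞)) :
    (coveringNumber r E).toNat ≤ n := by
  lift coveringNumber r E to ℕ using (ne_top_of_le_ne_top (by simp) h) with m hm
  simpa using by exact_mod_cast h

lemma le_covN_cast {r : ℝ} {E : Set X} (h : coveringNumber r E ≠ ⊤) :
    coveringNumber r E ≤ ((coveringNumber r E).toNat : ℕ∞) := by
  rw [ENat.coe_toNat h]

lemma enat_coe_le_ofReal {m : ℕ∞} {b : ℝ} (hm : m ≠ ⊤) (h : (m.toNat : ℝ) ≤ b) :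
    (m : ℝ≥0∞) ≤ ENNReal.ofReal b := by
  lift m to ℕ using hm
  simp only [ENat.toNat_coe] at h
  calc ((m : ℕ∞) : ℝ≥0∞) = ENNReal.ofReal (m : ℝ) := by simp [ENNReal.ofReal_natCast]
    _ ≤ ENNReal.ofReal b := ENNReal.ofReal_le_ofReal h

lemma enat_le_floor_of_le_ofReal {m : ℕ∞} {b : ℝ} (h : (m : ℝ≥0∞) ≤ ENNReal.ofReal b) :
    m ≤ (⌊b⌋₊ : ℕ∞) := by
  have hm : m ≠ ⊤ := by
    intro hc
    rw [hc] at h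
    simp only [ENat.toENNReal_top, top_le_iff] at h
    exact absurd h (ne_of_lt ENNReal.ofReal_lt_top)
  lift m to ℕ using hm
  rcases le_or_gt 0 b with hb | hb
  · have : ((m:ℝ≥0∞)) ≤ ENNReal.ofReal b := by simpa [ENNReal.ofReal_natCast] using h
    rw [← ENNReal.ofReal_natCast] at this
    have hmb : (m : ℝ) ≤ b := (ENNReal.ofReal_le_ofReal_iff hb).1 this
    exact_mod_cast Nat.le_floor hmb
  · have : ENNReal.ofReal b = 0 := ENNReal.ofReal_eq_zero.2 hb.le
    rw [this] at h
    have : ((m:ℕ∞):ℝ≥0∞) = 0 := le_antisymm h zero_le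
    have hm0 : m = 0 := by exact_mod_cast this
    simp [hm0]

lemma covN_comp {F : Set X} {r R : ℝ} {n m : ℕ}
    (h : ∀ x ∈ F, coveringNumber r (closedBall x R ∩ F) ≤ (n : ℕ∞))
    (hm : coveringNumber (R/2) F ≤ (m : ℕ∞)) :
    coveringNumber r F ≤ ((m * n : ℕ) : ℕ∞) := by
  classical
  obtain ⟨t, ht, hcard⟩ := exists_cover hm
  have hcov : F ⊆ ⋃ y ∈ t, (closedBall y (R/2) ∩ F) := by
    intro z hz
    obtain ⟨y, hy, hzy⟩ := by simpa only [mem_iUnion] using ht hz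
    simp only [mem_iUnion]
    exact ⟨y, hy, hzy, hz⟩
  have hpc : ∀ y ∈ t, coveringNumber r (closedBall y (R/2) ∩ F) ≤ (n : ℕ∞) := by
    intro y hy
    rcases (closedBall y (R/2) ∩ F).eq_empty_or_nonempty with he | ⟨x, hx⟩
    · rw [he]
      exact le_trans (by simpa using covN_le (r := r) (E := (∅ : Set X)) ∅ (by simp) : coveringNumber r (∅ : Set X) ≤ 0)
        zero_le
    · refine le_trans (covN_mono ?_) (h x hx.2)
      intro z hz
      refine ⟨?_, hz.2⟩
      have h1 : dist z y ≤ R/2 := hz.1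
      have h2 : dist x y ≤ R/2 := hx.1
      calc dist z x ≤ dist z y + dist x y := dist_triangle_right z x y
        _ ≤ R/2 + R/2 := add_le_add h1 h2
        _ = R := by ring
  refine le_trans (covN_biUnion_le t hcov hpc) ?_
  exact_mod_cast Nat.mul_le_mul_right n hcard

/-- scaling: every ball of radius `c` is covered by `A` balls of radius `c/2`,
where `A` is the covering number of the unit ball. -/

lemma quot_ev_le {F : Set X} {C u : ℝ} (hC : 1 ≤ C) (hu : 0 ≤ u)
    (h : ∀ δ : ℝ, 0 < δ → δ < 1 → ((coveringNumber δ F).toNat : ℝ) ≤ C * δ ^ (-u))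
    {ε : ℝ} (hε : 0 < ε) :
    ∀ᶠ δ in 𝓝[>] (0:ℝ),
      Real.log ((coveringNumber δ F).toNat : ℝ) / (- Real.log δ) ≤ u + ε := by
  set δ₁ : ℝ := min (1/2) (Real.exp (-(Real.log C)/ε)) with hδ₁
  have hδ₁pos : 0 < δ₁ := lt_min (by norm_num) (Real.exp_pos _)
  filter_upwards [Ioo_mem_nhdsGT_of_mem (by exact ⟨le_refl (0:ℝ), hδ₁pos⟩ : (0:ℝ) ∈ Ico 0 δ₁)]
    with δ hδ
  obtain ⟨hδ0, hδu⟩ := hδ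
  have hδ1 : δ < 1 := lt_of_lt_of_le hδu (le_trans (min_le_left _ _) (by norm_num))
  have hlog : 0 < -Real.log δ := by
    simpa using Real.log_neg hδ0 hδ1
  have hlogC : Real.log C ≤ ε * (-Real.log δ) := by
    have h2 : δ < Real.exp (-(Real.log C)/ε) := lt_of_lt_of_le hδu (min_le_right _ _)
    have h3 : Real.log δ < -(Real.log C)/ε := by
      rw [← Real.log_exp (-(Real.log C)/ε)]
      exact Real.log_lt_log hδ0 h2
    rw [div_eq_mul_inv] at h3
    have h4 : ε * Real.log δ < -Real.log C := by
      have h5 := (mul_lt_mul_iff_right₀ hε).2 h3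
      rwa [mul_comm (-Real.log C) ε⁻¹, ← mul_assoc, mul_inv_cancel₀ hε.ne', one_mul] at h5
    linarith
  set N : ℝ := ((coveringNumber δ F).toNat : ℝ) with hN
  have hN0 : 0 ≤ N := Nat.cast_nonneg _
  rw [div_le_iff₀ hlog]
  rcases eq_or_lt_of_le hN0 with hN1 | hN1
  · rw [← hN1, Real.log_zero]
    positivity
  · have hlogN : Real.log N ≤ Real.log C + u * (-Real.log δ) := by
      have := h δ hδ0 hδ1
      calc Real.log N ≤ Real.log (C * δ ^ (-u)) := Real.log_le_log hN1 this
        _ = Real.log C + (-u) * Real.log δ := by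
            rw [Real.log_mul (by positivity) (by positivity), Real.log_rpow hδ0]
        _ = Real.log C + u * (-Real.log δ) := by ring
    calc Real.log N ≤ Real.log C + u * (-Real.log δ) := hlogN
      _ ≤ ε * (-Real.log δ) + u * (-Real.log δ) := by linarith
      _ = (u + ε) * (-Real.log δ) := by ring

lemma quot_ev_nonneg (F : Set X) :
    ∀ᶠ δ in 𝓝[>] (0:ℝ),
      0 ≤ Real.log ((coveringNumber δ F).toNat : ℝ) / (- Real.log δ) := by
  filter_upwards [Ioo_mem_nhdsGT_of_mem (by norm_num : (0:ℝ) ∈ Ico (0:ℝ) 1)] with δ hδ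
  have hlog : 0 < -Real.log δ := by simpa using Real.log_neg hδ.1 hδ.2
  apply div_nonneg _ hlog.le
  rcases Nat.eq_zero_or_pos (coveringNumber δ F).toNat with h | h
  · simp [h]
  · have : (1:ℝ) ≤ ((coveringNumber δ F).toNat : ℝ) := by exact_mod_cast h
    exact Real.log_nonneg this

lemma box_le {F : Set X} {C u : ℝ} (hC : 1 ≤ C) (hu : 0 ≤ u)
    (h : ∀ δ : ℝ, 0 < δ → δ < 1 → ((coveringNumber δ F).toNat : ℝ) ≤ C * δ ^ (-u)) :
    upperBoxDim F ≤ u := by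
  have hcb : IsCoboundedUnder (· ≤ ·) (𝓝[>] (0:ℝ))
      (fun δ => Real.log ((coveringNumber δ F).toNat : ℝ) / (- Real.log δ)) :=
    (isBoundedUnder_of_eventually_ge (quot_ev_nonneg F)).isCoboundedUnder_le
  refine le_of_forall_pos_le_add fun ε hε => ?_
  exact limsup_le_of_le hcb (quot_ev_le hC hu h hε)

lemma box_nonneg {F : Set X} {C u : ℝ} (hC : 1 ≤ C) (hu : 0 ≤ u)
    (h : ∀ δ : ℝ, 0 < δ → δ < 1 → ((coveringNumber δ F).toNat : ℝ) ≤ C * δ ^ (-u)) :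
    0 ≤ upperBoxDim F := by
  refine le_limsup_of_frequently_le (quot_ev_nonneg F).frequently ?_
  exact isBoundedUnder_of_eventually_le (quot_ev_le hC hu h one_pos)

lemma box_gt {F : Set X} (hFne : F.Nonempty) {C u : ℝ} (hC : 1 ≤ C) (hu : 0 ≤ u)
    (hfin : ∀ δ : ℝ, 0 < δ → δ < 1 → coveringNumber δ F ≠ ⊤)
    (h : ∀ δ : ℝ, 0 < δ → δ < 1 → ((coveringNumber δ F).toNat : ℝ) ≤ C * δ ^ (-u))
    {s' : ℝ} (hs' : upperBoxDim F < s') :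
    ∃ δ₀ : ℝ, 0 < δ₀ ∧ δ₀ < 1 ∧ ∀ δ : ℝ, 0 < δ → δ < δ₀ →
      ((coveringNumber δ F).toNat : ℝ) ≤ δ ^ (-s') := by
  have hSne : {a : ℝ | ∀ᶠ δ in 𝓝[>] (0:ℝ),
      Real.log ((coveringNumber δ F).toNat : ℝ) / (- Real.log δ) ≤ a}.Nonempty :=
    ⟨u + 1, quot_ev_le hC hu h one_pos⟩
  rw [upperBoxDim, limsup_eq] at hs'
  obtain ⟨a, ha, has⟩ := exists_lt_of_csInf_lt hSne hs'
  simp only [mem_setOf_eq] at ha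
  rw [eventually_iff, mem_nhdsGT_iff_exists_Ioo_subset] at ha
  obtain ⟨δu, hδu, hsub⟩ := ha
  refine ⟨min δu (1/2), lt_min hδu (by norm_num),
    lt_of_le_of_lt (min_le_right _ _) (by norm_num), ?_⟩
  · intro δ hδ0 hδlt
    have hδu' : δ < δu := lt_of_lt_of_le hδlt (min_le_left _ _)
    have hδ1 : δ < 1 := lt_of_lt_of_le hδlt (le_trans (min_le_right _ _) (by norm_num))
    have hmem := hsub ⟨hδ0, hδu'⟩
    simp only [mem_setOf_eq] at hmem
    have hlog : 0 < -Real.log δ := by simpa using Real.log_neg hδ0 hδ1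
    have hN1 : (1:ℝ) ≤ ((coveringNumber δ F).toNat : ℝ) := by
      have h1 : (1:ℕ∞) ≤ coveringNumber δ F := one_le_covN hFne
      have h2 := hfin δ hδ0 hδ1
      have : 1 ≤ (coveringNumber δ F).toNat := by
        rw [← ENat.coe_toNat h2] at h1
        exact_mod_cast h1
      exact_mod_cast this
    have hlogN : Real.log ((coveringNumber δ F).toNat : ℝ) ≤ a * (-Real.log δ) :=
      (div_le_iff₀ hlog).1 hmem
    calc ((coveringNumber δ F).toNat : ℝ)
        = Real.exp (Real.log ((coveringNumber δ F).toNat : ℝ)) :=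
          (Real.exp_log (by linarith)).symm
      _ ≤ Real.exp (a * (-Real.log δ)) := Real.exp_le_exp.2 hlogN
      _ = δ ^ (-a) := by rw [Real.rpow_def_of_pos hδ0]; ring_nf
      _ ≤ δ ^ (-s') := Real.rpow_le_rpow_of_exponent_ge hδ0 hδ1.le (by linarith)

lemma spec_upper_mem {F : Set X} {θ : ℝ} (hθ0 : 0 < θ) (hθ1 : θ < 1)
    {s' δ₀ : ℝ} (hs' : 0 < s') (hδ₀0 : 0 < δ₀) (hδ₀1 : δ₀ < 1)
    (hfin : ∀ δ : ℝ, 0 < δ → δ < 1 → coveringNumber δ F ≠ ⊤)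
    (hb : ∀ δ : ℝ, 0 < δ → δ < δ₀ → ((coveringNumber δ F).toNat : ℝ) ≤ δ ^ (-s')) :
    s' / (1 - θ) ∈ {s : ℝ | 0 ≤ s ∧ ∃ C > (0 : ℝ), ∀ R : ℝ, 0 < R → R < 1 → ∀ x ∈ F,
      (coveringNumber (R ^ (1 / θ)) (closedBall x R ∩ F) : ℝ≥0∞)
        ≤ ENNReal.ofReal (C * (R / R ^ (1 / θ)) ^ s)} := by
  have h1θ : 0 < 1 - θ := by linarith
  set s'' : ℝ := s' / (1 - θ) with hs''
  have hs''0 : 0 ≤ s'' := le_of_lt (div_pos hs' h1θ)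
  set C : ℝ := (δ₀/2) ^ (-s') with hCdef
  have hC1 : 1 ≤ C :=
    Real.one_le_rpow_of_pos_of_le_one_of_nonpos (by linarith) (by linarith) (by linarith)
  have hC0 : 0 < C := lt_of_lt_of_le one_pos hC1
  refine ⟨hs''0, C, hC0, ?_⟩
  intro R hR0 hR1 x hx
  set r : ℝ := R ^ (1/θ) with hrdef
  have hr0 : 0 < r := Real.rpow_pos_of_pos hR0 _
  have hrR : r ≤ R := by
    have h1 : (1:ℝ) ≤ 1/θ := by
      rw [le_div_iff₀ hθ0]; linarith
    have := Real.rpow_le_rpow_of_exponent_ge hR0 hR1.le h1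
    rwa [Real.rpow_one] at this
  have hr1 : r < 1 := lt_of_le_of_lt hrR hR1
  have hmono : coveringNumber r (closedBall x R ∩ F) ≤ coveringNumber r F :=
    covN_mono inter_subset_right
  have hRr1 : (1:ℝ) ≤ R / r := (one_le_div hr0).2 hrR
  have hpow1 : (1:ℝ) ≤ (R/r) ^ s'' := Real.one_le_rpow hRr1 hs''0
  rcases lt_or_ge r δ₀ with hcase | hcase
  · -- small scale: use the box-dimension bound directly
    have hident : r ^ (-s') = (R/r) ^ s'' := by
      have hRr : R / r = R ^ (1 - 1/θ) := by
        rw [Real.rpow_sub hR0, Real.rpow_one]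
      rw [hRr, hrdef, ← Real.rpow_mul hR0.le, ← Real.rpow_mul hR0.le]
      congr 1
      have h1θne : (1:ℝ) - θ ≠ 0 := h1θ.ne'
      field_simp
      linear_combination s' * mul_inv_cancel₀ h1θne
    have hle : ((coveringNumber r F).toNat : ℝ) ≤ C * (R/r) ^ s'' := by
      have := hb r hr0 hcase
      rw [hident] at this
      calc ((coveringNumber r F).toNat : ℝ) ≤ (R/r) ^ s'' := this
        _ ≤ C * (R/r) ^ s'' := le_mul_of_one_le_left (by positivity) hC1
    calc ((coveringNumber r (closedBall x R ∩ F) : ℕ∞) : ℝ≥0∞)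
        ≤ ((coveringNumber r F : ℕ∞) : ℝ≥0∞) := ENat.toENNReal_le.2 hmono
      _ ≤ ENNReal.ofReal (C * (R/r) ^ s'') := enat_coe_le_ofReal (hfin r hr0 hr1) hle
  · -- large scale: a constant number of balls suffices
    have hhalf0 : 0 < δ₀/2 := by linarith
    have hhalf1 : δ₀/2 < 1 := by linarith
    have hmono2 : coveringNumber r F ≤ coveringNumber (δ₀/2) F :=
      covN_anti F (by linarith)
    have hle : ((coveringNumber (δ₀/2) F).toNat : ℝ) ≤ C := by
      simpa [hCdef] using hb (δ₀/2) hhalf0 (by linarith)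
    calc ((coveringNumber r (closedBall x R ∩ F) : ℕ∞) : ℝ≥0∞)
        ≤ ((coveringNumber (δ₀/2) F : ℕ∞) : ℝ≥0∞) :=
          ENat.toENNReal_le.2 (le_trans hmono hmono2)
      _ ≤ ENNReal.ofReal C := enat_coe_le_ofReal (hfin _ hhalf0 hhalf1) hle
      _ ≤ ENNReal.ofReal (C * (R/r) ^ s'') := by
          apply ENNReal.ofReal_le_ofReal
          exact le_mul_of_one_le_right hC0.le hpow1

lemma spec_lower {F : Set X} {θ : ℝ} (hθ0 : 0 < θ) (hθ1 : θ < 1)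
    {K C₂ : ℝ} (hK : 0 ≤ K) (hC₂ : 1 ≤ C₂)
    (hpoly : ∀ ρ : ℝ, 0 < ρ → ρ < 1 →
      coveringNumber ρ F ≠ ⊤ ∧ ((coveringNumber ρ F).toNat : ℝ) ≤ C₂ * ρ ^ (-K))
    {s C : ℝ} (hs0 : 0 ≤ s) (hC : 0 < C)
    (hbound : ∀ R : ℝ, 0 < R → R < 1 → ∀ x ∈ F,
      (coveringNumber (R ^ (1 / θ)) (closedBall x R ∩ F) : ℝ≥0∞)
        ≤ ENNReal.ofReal (C * (R / R ^ (1 / θ)) ^ s)) :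
    upperBoxDim F ≤ θ * K + (1 - θ) * s := by
  have h1θ : 0 < 1 - θ := by linarith
  set u : ℝ := θ * K + (1 - θ) * s with hu
  have hu0 : 0 ≤ u := by positivity
  set C' : ℝ := C₂ * 2 ^ K * C with hC'
  have hC'0 : 0 < C' := by
    have : (0:ℝ) < 2 ^ K := Real.rpow_pos_of_pos two_pos K
    positivity
  refine box_le (C := max C' 1) (le_max_right _ _) hu0 ?_
  intro δ hδ0 hδ1
  set R : ℝ := δ ^ θ with hRdef
  have hR0 : 0 < R := Real.rpow_pos_of_pos hδ0 _
  have hR1 : R < 1 := Real.rpow_lt_one hδ0.le hδ1 hθ0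
  have hRθ : R ^ (1/θ) = δ := by
    rw [hRdef, ← Real.rpow_mul hδ0.le, mul_one_div_cancel hθ0.ne', Real.rpow_one]
  set b : ℝ := C * (R / δ) ^ s with hbdef
  have hb0 : 0 ≤ b := by positivity
  set n : ℕ := ⌊b⌋₊ with hn
  have hx : ∀ x ∈ F, coveringNumber δ (closedBall x R ∩ F) ≤ (n : ℕ∞) := by
    intro x hxF
    have := hbound R hR0 hR1 x hxF
    rw [hRθ] at this
    exact enat_le_floor_of_le_ofReal this
  obtain ⟨hfinR, hpolyR⟩ := hpoly (R/2) (by linarith) (by linarith)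
  set m : ℕ := (coveringNumber (R/2) F).toNat with hm
  have hmle : coveringNumber (R/2) F ≤ (m : ℕ∞) := by rw [hm, ENat.coe_toNat hfinR]
  have hcomp : coveringNumber δ F ≤ ((m * n : ℕ) : ℕ∞) := covN_comp hx hmle
  have hreal : ((coveringNumber δ F).toNat : ℝ) ≤ (m : ℝ) * (n : ℝ) := by
    have := covN_toNat_le hcomp
    exact_mod_cast this
  have hnb : (n : ℝ) ≤ b := Nat.floor_le hb0
  have hprod : (m : ℝ) * (n : ℝ) ≤ (C₂ * (R/2) ^ (-K)) * b := by
    apply mul_le_mul hpolyR hnb (Nat.cast_nonneg _) (by positivity)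
  -- rewrite the right-hand side as C'' * δ ^ (-u)
  have hRhalf : (R/2 : ℝ) ^ (-K) = 2 ^ K * δ ^ (-(θ*K)) := by
    rw [Real.div_rpow hR0.le two_pos.le, Real.rpow_neg hR0.le, Real.rpow_neg two_pos.le,
      hRdef, ← Real.rpow_mul hδ0.le, ← Real.rpow_neg hδ0.le]
    field_simp
  have hRδ : (R / δ) ^ s = δ ^ ((θ - 1) * s) := by
    have : R / δ = δ ^ (θ - 1) := by
      rw [Real.rpow_sub hδ0, Real.rpow_one]
    rw [this, ← Real.rpow_mul hδ0.le]
  have hfinal : (C₂ * (R/2) ^ (-K)) * b = C' * δ ^ (-u) := by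
    rw [hbdef, hRhalf, hRδ, hC', hu]
    rw [show -(θ * K + (1 - θ) * s) = -(θ*K) + (θ-1)*s by ring]
    rw [Real.rpow_add hδ0]
    ring
  calc ((coveringNumber δ F).toNat : ℝ) ≤ (m : ℝ) * (n : ℝ) := hreal
    _ ≤ C' * δ ^ (-u) := by rw [← hfinal]; exact hprod
    _ ≤ max C' 1 * δ ^ (-u) := by
        apply mul_le_mul_of_nonneg_right (le_max_left _ _) (by positivity)

end AuxCovering

section AuxNormed
variable {V : Type*} [NormedAddCommGroup V] [NormedSpace ℝ V]

lemma covN_ball_scale {n : ℕ} (hn : coveringNumber (1/2 : ℝ) (closedBall (0:V) 1) ≤ (n : ℕ∞))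
    (x : V) {c : ℝ} (hc : 0 < c) :
    coveringNumber (c/2) (closedBall x c) ≤ (n : ℕ∞) := by
  classical
  obtain ⟨t, ht, hcard⟩ := exists_cover hn
  have hci : (t.image (fun y => x + c • y)).card ≤ n := le_trans Finset.card_image_le hcard
  refine le_trans (covN_le (t.image (fun y => x + c • y)) ?_) (by exact_mod_cast hci)
  intro z hz
  have hz' : c⁻¹ • (z - x) ∈ closedBall (0:V) 1 := by
    simp only [mem_closedBall, dist_zero_right, norm_smul, norm_inv, Real.norm_eq_abs,
      abs_of_pos hc]
    rw [inv_mul_le_iff₀ hc, mul_one]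
    simpa [dist_eq_norm] using hz
  obtain ⟨y, hy, hzy⟩ := by simpa only [mem_iUnion] using ht hz'
  simp only [mem_iUnion, Finset.mem_image]
  refine ⟨x + c • y, ⟨y, hy, rfl⟩, ?_⟩
  have : dist (c⁻¹ • (z - x)) y ≤ 1/2 := hzy
  have h2 : dist z (x + c • y) = c * dist (c⁻¹ • (z - x)) y := by
    rw [dist_eq_norm, dist_eq_norm, ← norm_smul_of_nonneg hc.le, smul_sub,
      smul_inv_smul₀ hc.ne']
    abel_nf
  rw [mem_closedBall, h2]
  calc c * dist (c⁻¹ • (z - x)) y ≤ c * (1/2) := by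
        exact mul_le_mul_of_nonneg_left this hc.le
    _ = c/2 := by ring

variable [ProperSpace V]

lemma covN_dyadic (M : ℝ) (hM : 0 < M) {A : ℕ}
    (hA : coveringNumber (1/2 : ℝ) (closedBall (0:V) 1) ≤ (A : ℕ∞)) (k : ℕ) :
    coveringNumber (M / 2^k) (closedBall (0:V) M) ≤ ((A^k : ℕ) : ℕ∞) := by
  induction k with
  | zero =>
    simpa using covN_le {(0:V)} (by simp [Set.subset_def])
  | succ k ih =>
    obtain ⟨t, ht, hcard⟩ := exists_cover ih
    have hstep : ∀ y ∈ t, coveringNumber (M / 2^(k+1)) (closedBall y (M / 2^k)) ≤ (A : ℕ∞) := by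
      intro y _
      have h2 : M / 2^(k+1) = (M / 2^k) / 2 := by ring
      rw [h2]
      exact covN_ball_scale hA y (by positivity)
    refine le_trans (covN_biUnion_le t ht hstep) ?_
    have : t.card * A ≤ A^(k+1) := by
      calc t.card * A ≤ A^k * A := Nat.mul_le_mul_right A hcard
        _ = A^(k+1) := (pow_succ A k).symm
    exact_mod_cast this

lemma exists_poly_bound (F : Set V) (hF : IsBounded F) :
    ∃ K ≥ (0:ℝ), ∃ C ≥ (1:ℝ), ∀ ρ : ℝ, 0 < ρ → ρ < 1 →
      coveringNumber ρ F ≠ ⊤ ∧ ((coveringNumber ρ F).toNat : ℝ) ≤ C * ρ ^ (-K) := by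
  classical
  -- the unit ball's covering number
  have htb : TotallyBounded (closedBall (0:V) 1) :=
    (isCompact_closedBall _ _).totallyBounded
  set A : ℕ := (coveringNumber (1/2 : ℝ) (closedBall (0:V) 1)).toNat with hAdef
  have hAne : coveringNumber (1/2 : ℝ) (closedBall (0:V) 1) ≠ ⊤ :=
    covN_ne_top (by norm_num) htb
  have hA : coveringNumber (1/2 : ℝ) (closedBall (0:V) 1) ≤ (A : ℕ∞) := by
    rw [hAdef, ENat.coe_toNat hAne]
  have hA1 : 1 ≤ A := by
    have h1 : (1:ℕ∞) ≤ coveringNumber (1/2 : ℝ) (closedBall (0:V) 1) :=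
      one_le_covN ⟨0, by simp⟩
    have := le_trans h1 hA
    exact_mod_cast this
  have hA1R : (1:ℝ) ≤ (A:ℝ) := by exact_mod_cast hA1
  -- a bounding ball for F
  obtain ⟨M₀, hM₀⟩ := hF.subset_closedBall 0
  set M : ℝ := max M₀ 1 with hMdef
  have hM1 : (1:ℝ) ≤ M := le_max_right _ _
  have hM : 0 < M := lt_of_lt_of_le one_pos hM1
  have hFM : F ⊆ closedBall 0 M := hM₀.trans (closedBall_subset_closedBall (le_max_left _ _))
  set K : ℝ := Real.log A / Real.log 2 with hKdef
  have hK0 : 0 ≤ K := div_nonneg (Real.log_nonneg hA1R) (Real.log_nonneg one_le_two)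
  refine ⟨K, hK0, (A:ℝ) * M ^ K, ?_, ?_⟩
  · have : (1:ℝ) ≤ M ^ K := Real.one_le_rpow hM1 hK0
    nlinarith
  intro ρ hρ0 hρ1
  set k : ℕ := ⌈Real.logb 2 (M/ρ)⌉₊ with hkdef
  have hMρ1 : (1:ℝ) ≤ M / ρ := by
    rw [le_div_iff₀ hρ0]; nlinarith
  have hlogb0 : 0 ≤ Real.logb 2 (M/ρ) := Real.logb_nonneg one_lt_two hMρ1
  have hkb : Real.logb 2 (M/ρ) ≤ (k:ℝ) := Nat.le_ceil _
  have hscale : M / 2^k ≤ ρ := by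
    rw [div_le_iff₀ (by positivity)]
    have h2k : M / ρ ≤ 2^(k:ℝ) := by
      have := (Real.logb_le_iff_le_rpow one_lt_two (by positivity)).1 hkb
      exact this
    rw [Real.rpow_natCast] at h2k
    calc M = (M/ρ) * ρ := by field_simp
      _ ≤ 2^k * ρ := by nlinarith [pow_pos (two_pos (α := ℝ)) k]
      _ = ρ * 2^k := by ring
  have hcov : coveringNumber ρ F ≤ ((A^k : ℕ) : ℕ∞) :=
    le_trans (covN_mono hFM) (le_trans (covN_anti _ hscale) (covN_dyadic M hM hA k))
  constructor
  · exact ne_top_of_le_ne_top (ENat.coe_ne_top _) hcov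
  have hnat : ((coveringNumber ρ F).toNat : ℝ) ≤ (A:ℝ)^k := by
    exact_mod_cast covN_toNat_le hcov
  refine hnat.trans ?_
  -- (A:ℝ)^k ≤ A * M^K * ρ^(-K)
  have hA0 : (0:ℝ) < A := lt_of_lt_of_le one_pos hA1R
  have hkk : (k:ℝ) ≤ Real.logb 2 (M/ρ) + 1 := (Nat.ceil_lt_add_one hlogb0).le
  have hAk : (A:ℝ)^k = Real.exp ((k:ℝ) * Real.log A) := by
    rw [← Real.log_pow, Real.exp_log (by positivity)]
  have hmain : (A:ℝ)^k ≤ Real.exp ((Real.logb 2 (M/ρ) + 1) * Real.log A) := by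
    rw [hAk]
    apply Real.exp_le_exp.2
    exact mul_le_mul_of_nonneg_right hkk (Real.log_nonneg hA1R)
  have hexp : Real.exp ((Real.logb 2 (M/ρ) + 1) * Real.log A)
      = (M/ρ) ^ K * A := by
    rw [add_mul, one_mul, Real.exp_add, Real.exp_log hA0]
    congr 1
    rw [Real.rpow_def_of_pos (by positivity)]
    congr 1
    rw [hKdef, Real.logb]
    field_simp
  rw [hexp] at hmain
  refine hmain.trans (le_of_eq ?_)
  rw [Real.div_rpow hM.le hρ0.le, Real.rpow_neg hρ0.le]
  field_simp
end AuxNormed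


/-- For every bounded `F ⊆ ℝ^d`, the generalized upper box dimension equals
the upper box dimension. -/
theorem genUpperBoxDim_eq_upperBoxDim_of_isBounded
    (d : ℕ) (F : Set (EuclideanSpace ℝ (Fin d))) (hF : IsBounded F) :
    genUpperBoxDim F = upperBoxDim F := by
  classical
  rcases F.eq_empty_or_nonempty with rfl | hFne
  · -- the empty set: both sides are zero
    have hcov : ∀ δ : ℝ, coveringNumber δ (∅ : Set (EuclideanSpace ℝ (Fin d))) = 0 :=
      fun δ => covN_empty δ
    have h1 : upperBoxDim (∅ : Set (EuclideanSpace ℝ (Fin d))) = 0 := by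
      rw [upperBoxDim]
      have heq : (fun δ : ℝ => Real.log
          (((coveringNumber δ (∅ : Set (EuclideanSpace ℝ (Fin d)))).toNat : ℝ)) / (-Real.log δ))
          = fun _ : ℝ => (0:ℝ) := by
        funext δ; rw [hcov δ]; simp
      rw [heq, limsup_const]
    have h2 : ∀ θ : ℝ, assouadSpectrum θ (∅ : Set (EuclideanSpace ℝ (Fin d))) = 0 := by
      intro θ
      have hmem : (0:ℝ) ∈ {s : ℝ | 0 ≤ s ∧ ∃ C > (0 : ℝ), ∀ R : ℝ, 0 < R → R < 1 →
          ∀ x ∈ (∅ : Set (EuclideanSpace ℝ (Fin d))),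
          (coveringNumber (R ^ (1 / θ)) (closedBall x R ∩ (∅ : Set (EuclideanSpace ℝ (Fin d)))) : ℝ≥0∞)
            ≤ ENNReal.ofReal (C * (R / R ^ (1 / θ)) ^ s)} :=
        ⟨le_refl 0, 1, one_pos, fun R _ _ x hx => absurd hx (notMem_empty x)⟩
      exact le_antisymm (csInf_le ⟨0, fun s hs => hs.1⟩ hmem)
        (le_csInf ⟨0, hmem⟩ fun s hs => hs.1)
    rw [genUpperBoxDim, h1]
    simp only [h2]
    exact limsup_const 0
  · obtain ⟨K, hK0, C₂, hC₂1, hpoly⟩ := exists_poly_bound F hF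
    set B := upperBoxDim F with hB
    have hfin : ∀ δ : ℝ, 0 < δ → δ < 1 → coveringNumber δ F ≠ ⊤ :=
      fun δ h1 h2 => (hpoly δ h1 h2).1
    have hpb : ∀ δ : ℝ, 0 < δ → δ < 1 → ((coveringNumber δ F).toNat : ℝ) ≤ C₂ * δ ^ (-K) :=
      fun δ h1 h2 => (hpoly δ h1 h2).2
    have hB0 : 0 ≤ B := box_nonneg hC₂1 hK0 hpb
    have hmem' : ∀ s' : ℝ, B < s' → 0 < s' → ∀ θ : ℝ, 0 < θ → θ < 1 →
        s' / (1 - θ) ∈ {s : ℝ | 0 ≤ s ∧ ∃ C > (0 : ℝ), ∀ R : ℝ, 0 < R → R < 1 → ∀ x ∈ F,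
          (coveringNumber (R ^ (1 / θ)) (closedBall x R ∩ F) : ℝ≥0∞)
            ≤ ENNReal.ofReal (C * (R / R ^ (1 / θ)) ^ s)} := by
      intro s' hs' hs'0 θ hθ0 hθ1
      obtain ⟨δ₀, hδ₀0, hδ₀1, hb⟩ := box_gt hFne hC₂1 hK0 hfin hpb hs'
      exact spec_upper_mem hθ0 hθ1 hs'0 hδ₀0 hδ₀1 hfin hb
    have hupper : ∀ s' : ℝ, B < s' → 0 < s' → ∀ θ : ℝ, 0 < θ → θ < 1 →
        assouadSpectrum θ F ≤ s' / (1 - θ) := fun s' hs' hs'0 θ hθ0 hθ1 =>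
      csInf_le ⟨0, fun s hs => hs.1⟩ (hmem' s' hs' hs'0 θ hθ0 hθ1)
    have hlower : ∀ θ : ℝ, 0 < θ → θ < 1 → (B - θ*K)/(1-θ) ≤ assouadSpectrum θ F := by
      intro θ hθ0 hθ1
      have h1θ : 0 < 1 - θ := by linarith
      refine le_csInf ⟨(B+1)/(1-θ), hmem' (B+1) (by linarith) (by linarith) θ hθ0 hθ1⟩ ?_
      rintro s ⟨hs0, C, hC, hbound⟩
      have hbox : B ≤ θ * K + (1 - θ) * s :=
        spec_lower hθ0 hθ1 hK0 hC₂1 hpoly hs0 hC hbound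
      rw [div_le_iff₀ h1θ]
      linarith
    have htend : Tendsto (fun θ : ℝ => assouadSpectrum θ F) (𝓝[>] (0:ℝ)) (𝓝 B) := by
      rw [tendsto_order]
      constructor
      · intro b hb
        have hc : ContinuousAt (fun θ : ℝ => (B - θ*K)/(1-θ)) 0 := by
          apply ContinuousAt.div
          · fun_prop
          · fun_prop
          · norm_num
        have hL : Tendsto (fun θ : ℝ => (B - θ*K)/(1-θ)) (𝓝[>] (0:ℝ)) (𝓝 B) := by
          have h0 : (B - 0*K)/(1-0) = B := by norm_num
          have h2 := hc.tendsto
          rw [h0] at h2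
          exact h2.mono_left nhdsWithin_le_nhds
        filter_upwards [hL.eventually_const_lt hb,
          Ioo_mem_nhdsGT_of_mem (show (0:ℝ) ∈ Ico (0:ℝ) 1 by norm_num)] with θ h1 h2
        exact lt_of_lt_of_le h1 (hlower θ h2.1 h2.2)
      · intro b hb
        set s' : ℝ := (B + b)/2 with hs'def
        have hBs' : B < s' := by rw [hs'def]; linarith
        have hs'0 : 0 < s' := by rw [hs'def]; linarith
        have hs'b : s' < b := by rw [hs'def]; linarith
        have hb0 : 0 < b := by linarith
        have hθb : 0 < (b - s')/b := div_pos (by linarith) hb0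
        filter_upwards [Ioo_mem_nhdsGT_of_mem
          (show (0:ℝ) ∈ Ico (0:ℝ) (min ((b - s')/b) 1) from
            ⟨le_refl _, lt_min hθb one_pos⟩)] with θ hθ
        obtain ⟨hθ0, hθlt⟩ := hθ
        have hθ1 : θ < 1 := lt_of_lt_of_le hθlt (min_le_right _ _)
        refine lt_of_le_of_lt (hupper s' hBs' hs'0 θ hθ0 hθ1) ?_
        have hθ2 : θ < (b - s')/b := lt_of_lt_of_le hθlt (min_le_left _ _)
        rw [lt_div_iff₀ hb0] at hθ2
        rw [div_lt_iff₀ (by linarith : (0:ℝ) < 1 - θ)]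
        nlinarith
    rw [genUpperBoxDim]
    exact htend.limsup_eq

end
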